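/- Suppose c₁ : Σ × S → ℝ and ψ : Σ × S → ℝ satisfy the Lasry–Lions monotonicity conditions: Σ_{x∈Σ}(c₁(x,p) − c₁(x,p'))(p_x − p'_x) > 0 and Σ_{x∈Σ}(ψ(x,p) − ψ(x,p'))(p_x − p'_x) ≥ 0 for all p ≠ p' in S. If m, m' : [0,T] → S are continuous and satisfy 0 ≤ Σ_x (ψ(x,m(T)) − ψ(x,m'(T)))(m'_x(T) − m_x(T)) + ∫_0^T Σ_x (c₁(x,m(t)) − c₁(x,m'(t)))(m'_x(t) − m_x(t)) dt, then m(t) = m'(t) for all t ∈ [0,T]. -/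
import Mathlib


open MeasureTheory

/-- Under the Lasry–Lions monotonicity conditions on `c₁` (strict) and `ψ` (non-strict), any two
continuous simplex-valued flows `m, m'` satisfying the key inequality obtained from the
optimality of two mean field game solutions must coincide on `[0,T]`. -/
theorem stmt_7 (d : ℕ) (T : ℝ) (hT : 0 < T)
    (c₁ ψ : Fin d → (Fin d → ℝ) → ℝ)
    (hc₁cont : ∀ x, Continuous (c₁ x)) (hψcont : ∀ x, Continuous (ψ x))
    (hmono_c : ∀ p ∈ stdSimplex ℝ (Fin d), ∀ q ∈ stdSimplex ℝ (Fin d), p ≠ q →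
      0 < ∑ x, (c₁ x p - c₁ x q) * (p x - q x))
    (hmono_ψ : ∀ p ∈ stdSimplex ℝ (Fin d), ∀ q ∈ stdSimplex ℝ (Fin d), p ≠ q →
      0 ≤ ∑ x, (ψ x p - ψ x q) * (p x - q x))
    (m m' : ℝ → Fin d → ℝ)
    (hm : ∀ t ∈ Set.Icc (0:ℝ) T, m t ∈ stdSimplex ℝ (Fin d))
    (hm' : ∀ t ∈ Set.Icc (0:ℝ) T, m' t ∈ stdSimplex ℝ (Fin d))
    (hmc : ContinuousOn m (Set.Icc 0 T)) (hm'c : ContinuousOn m' (Set.Icc 0 T))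
    (hineq : 0 ≤ (∑ x, (ψ x (m T) - ψ x (m' T)) * (m' T x - m T x)) +
      ∫ t in Set.Icc (0:ℝ) T, ∑ x, (c₁ x (m t) - c₁ x (m' t)) * (m' t x - m t x)) :
    ∀ t ∈ Set.Icc (0:ℝ) T, m t = m' t := by

  classical
  set g : ℝ → ℝ := fun t => ∑ x, (c₁ x (m t) - c₁ x (m' t)) * (m' t x - m t x) with hgdef
  have hgcont : ContinuousOn g (Set.Icc 0 T) := by
    apply continuousOn_finset_sum
    intro x _
    exact (((hc₁cont x).comp_continuousOn hmc).sub
        ((hc₁cont x).comp_continuousOn hm'c)).mul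
      (((continuous_apply x).comp_continuousOn hm'c).sub
        ((continuous_apply x).comp_continuousOn hmc))
  have hgle : ∀ t ∈ Set.Icc (0:ℝ) T, m t ≠ m' t → g t < 0 := by
    intro t ht h
    have h1 := hmono_c (m t) (hm t ht) (m' t) (hm' t ht) h
    have h2 : g t = -(∑ x, (c₁ x (m t) - c₁ x (m' t)) * (m t x - m' t x)) := by
      rw [hgdef, ← Finset.sum_neg_distrib]
      exact Finset.sum_congr rfl (fun x _ => by ring)
    rw [h2]
    linarith
  have hgle0 : ∀ t ∈ Set.Icc (0:ℝ) T, g t ≤ 0 := by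
    intro t ht
    by_cases h : m t = m' t
    · simp [hgdef, h]
    · exact le_of_lt (hgle t ht h)
  have hTmem : T ∈ Set.Icc (0:ℝ) T := ⟨le_of_lt hT, le_refl T⟩
  have hA : (∑ x, (ψ x (m T) - ψ x (m' T)) * (m' T x - m T x)) ≤ 0 := by
    by_cases h : m T = m' T
    · simp [h]
    · have h1 := hmono_ψ (m T) (hm T hTmem) (m' T) (hm' T hTmem) h
      have h2 : (∑ x, (ψ x (m T) - ψ x (m' T)) * (m' T x - m T x))
          = -(∑ x, (ψ x (m T) - ψ x (m' T)) * (m T x - m' T x)) := by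
        rw [← Finset.sum_neg_distrib]
        exact Finset.sum_congr rfl (fun x _ => by ring)
      rw [h2]; linarith
  have hgint : IntegrableOn g (Set.Icc 0 T) := hgcont.integrableOn_compact isCompact_Icc
  by_contra hcon
  push_neg at hcon
  obtain ⟨t₀, ht₀, hne⟩ := hcon
  have hgneg : g t₀ < 0 := hgle t₀ ht₀ hne
  -- find a small interval where g < 0
  have hev : g ⁻¹' Set.Iio 0 ∈ nhdsWithin t₀ (Set.Icc 0 T) :=
    hgcont t₀ ht₀ (Iio_mem_nhds hgneg)
  obtain ⟨U, hUopen, ht₀U, hUsub⟩ := mem_nhdsWithin.1 hev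
  obtain ⟨ε, hε, hball⟩ := Metric.isOpen_iff.1 hUopen t₀ ht₀U
  set a : ℝ := max 0 (t₀ - ε) with ha
  set b : ℝ := min T (t₀ + ε) with hb
  have hab : a < b := by
    rcases ht₀ with ⟨h0, hTle⟩
    apply max_lt <;> [apply lt_min; apply lt_min] <;> linarith
  have hIoosub : Set.Ioo a b ⊆ Function.support (fun t => -g t) ∩ Set.Icc 0 T := by
    intro t htm
    have h1 : t ∈ Set.Icc (0:ℝ) T :=
      ⟨le_trans (le_max_left _ _) (le_of_lt htm.1), le_trans (le_of_lt htm.2) (min_le_left _ _)⟩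
    have h2 : t ∈ Metric.ball t₀ ε := by
      rw [Real.ball_eq_Ioo]
      constructor
      · exact lt_of_le_of_lt (le_max_right _ _) htm.1
      · exact lt_of_lt_of_le htm.2 (min_le_right _ _)
    have h3 : g t < 0 := hUsub ⟨hball h2, h1⟩
    exact ⟨fun h => absurd (neg_eq_zero.mp h) h3.ne, h1⟩
  have hIoosub' : Set.Ioo a b ⊆ Function.support (fun t => -g t) ∩ Set.Icc 0 T := hIoosub
  have hpos : 0 < ∫ t in Set.Icc (0:ℝ) T, -g t := by
    rw [MeasureTheory.setIntegral_pos_iff_support_of_nonneg_ae]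
    · refine lt_of_lt_of_le ?_ (measure_mono hIoosub)
      rw [Real.volume_Ioo]
      simpa using hab
    · refine (ae_restrict_iff' measurableSet_Icc).2 (Filter.Eventually.of_forall ?_)
      intro t ht
      simpa using neg_nonneg.2 (hgle0 t ht)
    · exact hgint.neg
  have hintneg : (∫ t in Set.Icc (0:ℝ) T, g t) < 0 := by
    rw [MeasureTheory.integral_neg] at hpos
    linarith
  have : (∫ t in Set.Icc (0:ℝ) T, ∑ x, (c₁ x (m t) - c₁ x (m' t)) * (m' t x - m t x)) < 0 := hintneg
  linarith
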